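/- Let F be ℝ or ℂ, and let A, B be m×s matrices and C, D be n×s matrices over F such that 2·rank[A B] > 3s and 2·rank[C D] > 3s, where [A B] and [C D] denote the m×2s and n×2s concatenated matrices. Then the m×n pencil P = (ACᵀ + BDᵀ, BCᵀ) satisfies: P ∉ B_{s,s}, yet the infimum over (A',B') ∈ B_{s,s} of ‖P − (A',B')‖ equals 0. Consequently P has no best approximation in B_{s,s} in the norm topology. -/

import Mathlib

open Matrix

/-- `(A', B')` lies in the orbit of the pencil `(A, B)` under the action of
`GL_m(F) × GL_n(F) × GL_2(F)` given by
`(P, U, T) · (A, B) = (P (t₁₁ A + t₁₂ B) Uᵀ, P (t₂₁ A + t₂₂ B) Uᵀ)`. -/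
def InOrbit {F : Type*} [Field F] {m n : ℕ}
    (A B A' B' : Matrix (Fin m) (Fin n) F) : Prop :=
  ∃ (P : Matrix (Fin m) (Fin m) F) (U : Matrix (Fin n) (Fin n) F)
    (T : Matrix (Fin 2) (Fin 2) F),
    IsUnit P.det ∧ IsUnit U.det ∧ IsUnit T.det ∧
    A' = P * (T 0 0 • A + T 0 1 • B) * U.transpose ∧
    B' = P * (T 1 0 • A + T 1 1 • B) * U.transpose

/-- The pencil `(A, B)` belongs to `B_{r,s}`: some pencil in its orbit has
first coefficient of rank `≤ r` and second coefficient of rank `≤ s`. -/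
def InBset {F : Type*} [Field F] {m n : ℕ} (r s : ℕ)
    (A B : Matrix (Fin m) (Fin n) F) : Prop :=
  ∃ A' B', InOrbit A B A' B' ∧ A'.rank ≤ r ∧ B'.rank ≤ s


/-- Squared Frobenius norm of a matrix. -/
noncomputable def frobSq {F : Type*} [RCLike F] {m n : ℕ}
    (A : Matrix (Fin m) (Fin n) F) : ℝ :=
  ∑ i, ∑ j, ‖A i j‖ ^ 2

/-- Distance between two pencils induced by the norm
`‖(A, B)‖ = √(‖A‖_F² + ‖B‖_F²)`. -/
noncomputable def pdist {F : Type*} [RCLike F] {m n : ℕ}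
    (p q : Matrix (Fin m) (Fin n) F × Matrix (Fin m) (Fin n) F) : ℝ :=
  Real.sqrt (frobSq (p.1 - q.1) + frobSq (p.2 - q.2))

/-- Sylvester rank inequality. -/
lemma sylvester_rank_ineq {F : Type*} [Field F] {m k n : Type*}
    [Fintype m] [Fintype k] [Fintype n]
    (X : Matrix m k F) (Y : Matrix k n F) :
    X.rank + Y.rank ≤ (X * Y).rank + Fintype.card k := by
  classical
  set f := X.mulVecLin with hf
  set W := LinearMap.range Y.mulVecLin with hW
  have h1 : (X * Y).rank = Module.finrank F (W.map f) := by
    rw [Matrix.rank, Matrix.mulVecLin_mul, LinearMap.range_comp]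
  have h2 : Module.finrank F (LinearMap.range (f.domRestrict W)) +
      Module.finrank F (LinearMap.ker (f.domRestrict W)) = Y.rank := by
    rw [LinearMap.finrank_range_add_finrank_ker]
    rfl
  have h3 : Module.finrank F (LinearMap.range (f.domRestrict W)) =
      Module.finrank F (W.map f) := by
    rw [LinearMap.range_domRestrict]
  have h4 : Module.finrank F (LinearMap.ker (f.domRestrict W)) ≤
      Module.finrank F (LinearMap.ker f) := by
    have hinj : Function.Injective
        (LinearMap.codRestrict (LinearMap.ker f)
          (W.subtype ∘ₗ (LinearMap.ker (f.domRestrict W)).subtype)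
          (fun x => x.2)) := by
      intro a b hab
      apply Subtype.ext
      apply Subtype.ext
      have := congrArg Subtype.val hab
      exact this
    exact LinearMap.finrank_le_finrank_of_injective hinj
  have h5 : X.rank + Module.finrank F (LinearMap.ker f) = Fintype.card k := by
    rw [Matrix.rank, ← hf, LinearMap.finrank_range_add_finrank_ker f,
      Module.finrank_fintype_fun_eq_card]
  omega

/-- No nonzero combination `α • (A Cᵀ + B Dᵀ) + β • (B Cᵀ)` with `α ≠ 0`
has rank at most `s`, given the rank hypotheses. -/
lemma core_rank_lemma {F : Type*} [Field F] {m n s : ℕ}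
    (A B : Matrix (Fin m) (Fin s) F) (C D : Matrix (Fin n) (Fin s) F)
    (hAB : 3 * s < 2 * (Matrix.fromCols A B).rank)
    (hCD : 3 * s < 2 * (Matrix.fromCols C D).rank)
    {α β : F} (hα : α ≠ 0) :
    ¬ (α • (A * Cᵀ + B * Dᵀ) + β • (B * Cᵀ)).rank ≤ s := by
  intro hr
  set Y : Matrix (Fin n) (Fin s ⊕ Fin s) F :=
    fromCols (α • C) (β • C + α • D) with hYdef
  have hK : Y = fromCols C D *
      fromBlocks (α • (1 : Matrix (Fin s) (Fin s) F)) (β • (1 : Matrix (Fin s) (Fin s) F))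
        (0 : Matrix (Fin s) (Fin s) F) (α • (1 : Matrix (Fin s) (Fin s) F)) := by
    simp only [fromCols_mul_fromBlocks, Matrix.mul_smul, Matrix.mul_one,
      Matrix.mul_zero, add_zero, hYdef]
  have hdet : IsUnit (fromBlocks (α • (1 : Matrix (Fin s) (Fin s) F))
      (β • (1 : Matrix (Fin s) (Fin s) F)) (0 : Matrix (Fin s) (Fin s) F)
      (α • (1 : Matrix (Fin s) (Fin s) F))).det := by
    rw [Matrix.det_fromBlocks_zero₂₁, Matrix.det_smul]
    simp only [det_one, mul_one]
    exact (isUnit_iff_ne_zero).2 (mul_ne_zero (pow_ne_zero _ hα) (pow_ne_zero _ hα))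
  have hrY : Y.rank = (fromCols C D).rank := by
    rw [hK]; exact rank_mul_eq_left_of_isUnit_det _ _ hdet
  have hfact : fromCols A B * Yᵀ = α • (A * Cᵀ + B * Dᵀ) + β • (B * Cᵀ) := by
    rw [hYdef, transpose_fromCols, fromCols_mul_fromRows]
    simp only [transpose_add, transpose_smul, Matrix.mul_add, Matrix.mul_smul,
      smul_add]
    abel
  have hsyl := sylvester_rank_ineq (fromCols A B) Yᵀ
  rw [hfact, Y.rank_transpose, hrY] at hsyl
  simp only [Fintype.card_sum, Fintype.card_fin] at hsyl
  omega

lemma pencil_not_in_Bset {F : Type*} [Field F] {m n s : ℕ}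
    (A B : Matrix (Fin m) (Fin s) F) (C D : Matrix (Fin n) (Fin s) F)
    (hAB : 3 * s < 2 * (Matrix.fromCols A B).rank)
    (hCD : 3 * s < 2 * (Matrix.fromCols C D).rank) :
    ¬ InBset s s (A * Cᵀ + B * Dᵀ) (B * Cᵀ) := by
  rintro ⟨A', B', ⟨P, U, T, hP, hU, hT, hA', hB'⟩, hrA, hrB⟩
  have hUT : IsUnit Uᵀ.det := by rwa [det_transpose]
  have hdT : T 0 0 * T 1 1 - T 0 1 * T 1 0 ≠ 0 := by
    have := hT.ne_zero
    rwa [Matrix.det_fin_two] at this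
  have hrankA : A'.rank =
      (T 0 0 • (A * Cᵀ + B * Dᵀ) + T 0 1 • (B * Cᵀ)).rank := by
    rw [hA', rank_mul_eq_left_of_isUnit_det _ _ hUT,
      rank_mul_eq_right_of_isUnit_det _ _ hP]
  have hrankB : B'.rank =
      (T 1 0 • (A * Cᵀ + B * Dᵀ) + T 1 1 • (B * Cᵀ)).rank := by
    rw [hB', rank_mul_eq_left_of_isUnit_det _ _ hUT,
      rank_mul_eq_right_of_isUnit_det _ _ hP]
  by_cases h0 : T 0 0 = 0
  · have h10 : T 1 0 ≠ 0 := by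
      intro h; apply hdT; rw [h0, h]; ring
    exact core_rank_lemma A B C D hAB hCD h10 (hrankB ▸ hrB)
  · exact core_rank_lemma A B C D hAB hCD h0 (hrankA ▸ hrA)

section frob
variable {F : Type*} [RCLike F] {m n : ℕ} (X : Matrix (Fin m) (Fin n) F)

lemma frobSq_nonneg : 0 ≤ frobSq X := by
  unfold frobSq; positivity

lemma frobSq_zero' : frobSq (0 : Matrix (Fin m) (Fin n) F) = 0 := by
  simp [frobSq]

lemma frobSq_smul (c : F) : frobSq (c • X) = ‖c‖ ^ 2 * frobSq X := by
  simp only [frobSq, Matrix.smul_apply, smul_eq_mul, norm_mul, mul_pow,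
    Finset.mul_sum]

lemma eq_zero_of_frobSq_eq_zero (h : frobSq X = 0) : X = 0 := by
  ext i j
  have h1 := (Finset.sum_eq_zero_iff_of_nonneg (fun i _ => by positivity)).1 h i
    (Finset.mem_univ i)
  have h2 := (Finset.sum_eq_zero_iff_of_nonneg (fun j _ => by positivity)).1 h1 j
    (Finset.mem_univ j)
  have h3 : ‖X i j‖ = 0 := by
    have := sq_eq_zero_iff.1 h2
    simpa using this
  simpa using norm_eq_zero.1 h3

end frob

lemma pencil_dist_lt {F : Type*} [RCLike F] {m n s : ℕ}
    (A B : Matrix (Fin m) (Fin s) F) (C D : Matrix (Fin n) (Fin s) F) :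
    ∀ ε : ℝ, 0 < ε → ∃ A' B', InBset s s A' B' ∧
      pdist (A * Cᵀ + B * Dᵀ, B * Cᵀ) (A', B') < ε := by
  intro ε hε
  set c : ℝ := Real.sqrt (frobSq (A * Cᵀ)) with hc
  have hc0 : 0 ≤ c := Real.sqrt_nonneg _
  set t : ℝ := ε / (c + 1) with htdef
  have ht : 0 < t := div_pos hε (by linarith)
  have hτ : (t : F) ≠ 0 := RCLike.ofReal_ne_zero.mpr ht.ne'
  refine ⟨A * Cᵀ + B * Dᵀ, B * Cᵀ + (t : F) • (A * Cᵀ), ?_, ?_⟩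
  · refine ⟨B * (D - (t : F)⁻¹ • C)ᵀ, B * Cᵀ + (t : F) • (A * Cᵀ),
      ⟨1, 1, !![1, -(t : F)⁻¹; 0, 1], ?_, ?_, ?_, ?_, ?_⟩, ?_, ?_⟩
    · simp
    · simp
    · simp [Matrix.det_fin_two_of]
    · simp only [Matrix.cons_val', Matrix.cons_val_zero, Matrix.cons_val_one,
        Matrix.head_cons, Matrix.head_fin_const, Matrix.empty_val',
        Matrix.cons_val_fin_one, Matrix.of_apply, transpose_one]
      rw [Matrix.one_mul, Matrix.mul_one, transpose_sub, transpose_smul,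
        Matrix.mul_sub, Matrix.mul_smul]
      rw [one_smul, neg_smul, smul_add, smul_smul, inv_mul_cancel₀ hτ, one_smul]
      abel
    · simp only [Matrix.cons_val', Matrix.cons_val_zero, Matrix.cons_val_one,
        Matrix.head_cons, Matrix.head_fin_const, Matrix.empty_val',
        Matrix.cons_val_fin_one, Matrix.of_apply, transpose_one]
      rw [Matrix.one_mul, Matrix.mul_one, zero_smul, one_smul, zero_add]
    · calc (B * (D - (t : F)⁻¹ • C)ᵀ).rank ≤ B.rank := rank_mul_le_left _ _
        _ ≤ s := by simpa using B.rank_le_card_width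
    · have heq : B * Cᵀ + (t : F) • (A * Cᵀ) = (B + (t : F) • A) * Cᵀ := by
        rw [Matrix.add_mul, Matrix.smul_mul]
      rw [heq]
      calc ((B + (t : F) • A) * Cᵀ).rank ≤ Cᵀ.rank := rank_mul_le_right _ _
        _ ≤ s := by simpa using Cᵀ.rank_le_card_height
  · have h1 : (A * Cᵀ + B * Dᵀ) - (A * Cᵀ + B * Dᵀ) = 0 := sub_self _
    have h2 : B * Cᵀ - (B * Cᵀ + (t : F) • (A * Cᵀ)) = (-(t : F)) • (A * Cᵀ) := by
      rw [neg_smul]; abel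
    rw [pdist]
    simp only [h1, h2]
    rw [frobSq_zero', zero_add, frobSq_smul]
    have hnorm : ‖(-(t : F))‖ = t := by
      rw [norm_neg, RCLike.norm_ofReal, abs_of_pos ht]
    rw [hnorm, Real.sqrt_mul (by positivity), Real.sqrt_sq ht.le, ← hc]
    calc t * c < t * (c + 1) := mul_lt_mul_of_pos_left (by linarith) ht
      _ = ε := by rw [htdef, div_mul_cancel₀]; linarith

/-- If `2 rank [A B] > 3s` and `2 rank [C D] > 3s`, then the pencil
`(A Cᵀ + B Dᵀ, B Cᵀ)` is not in `B_{s,s}`, yet its distance to `B_{s,s}` is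
zero; consequently it has no best approximation in `B_{s,s}`. -/
theorem no_best_approximation_template {F : Type*} [RCLike F] {m n s : ℕ}
    (A B : Matrix (Fin m) (Fin s) F) (C D : Matrix (Fin n) (Fin s) F)
    (hAB : 3 * s < 2 * (Matrix.fromCols A B).rank)
    (hCD : 3 * s < 2 * (Matrix.fromCols C D).rank) :
    ¬ InBset s s (A * Cᵀ + B * Dᵀ) (B * Cᵀ) ∧
    (∀ ε : ℝ, 0 < ε → ∃ A' B', InBset s s A' B' ∧
      pdist (A * Cᵀ + B * Dᵀ, B * Cᵀ) (A', B') < ε) ∧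
    ¬ ∃ A' B', InBset s s A' B' ∧ ∀ A'' B'', InBset s s A'' B'' →
      pdist (A * Cᵀ + B * Dᵀ, B * Cᵀ) (A', B') ≤
        pdist (A * Cᵀ + B * Dᵀ, B * Cᵀ) (A'', B'') := by
  refine ⟨pencil_not_in_Bset A B C D hAB hCD, pencil_dist_lt A B C D, ?_⟩
  rintro ⟨A', B', hBset, hmin⟩
  have hd0 : pdist (A * Cᵀ + B * Dᵀ, B * Cᵀ) (A', B') = 0 := by
    by_contra h
    have hpos : 0 < pdist (A * Cᵀ + B * Dᵀ, B * Cᵀ) (A', B') :=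
      lt_of_le_of_ne (Real.sqrt_nonneg _) (Ne.symm h)
    obtain ⟨A'', B'', hB'', hd⟩ := pencil_dist_lt A B C D _ hpos
    exact absurd (hmin A'' B'' hB'') (not_le.2 hd)
  have hsum : frobSq ((A * Cᵀ + B * Dᵀ) - A') + frobSq ((B * Cᵀ) - B') = 0 := by
    have hle := Real.sqrt_eq_zero'.1 hd0
    have hge : 0 ≤ frobSq ((A * Cᵀ + B * Dᵀ) - A') + frobSq ((B * Cᵀ) - B') := by
      have := frobSq_nonneg ((A * Cᵀ + B * Dᵀ) - A')
      have := frobSq_nonneg ((B * Cᵀ) - B')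
      linarith
    linarith
  have hA'eq : A' = A * Cᵀ + B * Dᵀ := by
    have h1 : frobSq ((A * Cᵀ + B * Dᵀ) - A') = 0 := by
      have := frobSq_nonneg ((A * Cᵀ + B * Dᵀ) - A')
      have := frobSq_nonneg ((B * Cᵀ) - B')
      linarith
    have := eq_zero_of_frobSq_eq_zero _ h1
    rw [sub_eq_zero] at this
    exact this.symm
  have hB'eq : B' = B * Cᵀ := by
    have h1 : frobSq ((B * Cᵀ) - B') = 0 := by
      have := frobSq_nonneg ((A * Cᵀ + B * Dᵀ) - A')
      have := frobSq_nonneg ((B * Cᵀ) - B')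
      linarith
    have := eq_zero_of_frobSq_eq_zero _ h1
    rw [sub_eq_zero] at this
    exact this.symm
  exact pencil_not_in_Bset A B C D hAB hCD (hA'eq ▸ hB'eq ▸ hBset)
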